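/- Over F = ℝ with metaplectic cocycle β, for all λ₁, λ₂ ∈ ℝ^× one has β(z(λ₁), z(λ₂)) = [λ₁, λ₂], the quadratic Hilbert symbol; in particular β(z(-1), z(-1)) = -1, so the extension does not split over the center Z. -/

import Mathlib

open Matrix

noncomputable def hilbR (a b : ℝ) : ℝ := if a < 0 ∧ b < 0 then -1 else 1

noncomputable def ellR (g : Matrix (Fin 2) (Fin 2) ℝ) : ℝ :=
  if g 1 0 ≠ 0 then g 1 0 else g 1 1

noncomputable def sR (_ : Matrix (Fin 2) (Fin 2) ℝ) : ℝ := 1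

noncomputable def betaR (g₁ g₂ : Matrix (Fin 2) (Fin 2) ℝ) : ℝ :=
  hilbR (ellR (g₁ * g₂) / ellR g₁) (ellR (g₁ * g₂) / ellR g₂ * g₁.det) *
    sR g₁ * sR g₂ * sR (g₁ * g₂)

lemma betaR_z (lam₁ lam₂ : ℝ) (h₁ : lam₁ ≠ 0) (h₂ : lam₂ ≠ 0) :
    betaR !![lam₁, 0; 0, lam₁] !![lam₂, 0; 0, lam₂] = hilbR lam₁ lam₂ := by
  have hmul : !![lam₁, 0; 0, lam₁] * !![lam₂, 0; 0, lam₂]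
      = !![lam₁*lam₂, 0; 0, lam₁*lam₂] := by
    ext i j; fin_cases i <;> fin_cases j <;>
      simp [Matrix.mul_apply, Fin.sum_univ_two]
  have e1 : ellR !![lam₁, 0; 0, lam₁] = lam₁ := by simp [ellR]
  have e2 : ellR !![lam₂, 0; 0, lam₂] = lam₂ := by simp [ellR]
  have e3 : ellR !![lam₁*lam₂, 0; 0, lam₁*lam₂] = lam₁*lam₂ := by simp [ellR]
  rw [betaR, hmul, e1, e2, e3, Matrix.det_fin_two_of, sR, sR, sR]
  have d1 : lam₁ * lam₂ / lam₁ = lam₂ := by field_simp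
  have d2 : lam₁ * lam₂ / lam₂ * (lam₁ * lam₁ - 0 * 0) = lam₁ * (lam₁ * lam₁) := by
    field_simp
    ring
  rw [d1, d2]
  have hcube : lam₁ * (lam₁ * lam₁) < 0 ↔ lam₁ < 0 := by
    rw [show lam₁ * (lam₁ * lam₁) = lam₁ ^ 3 by ring]
    exact Odd.pow_neg_iff (by decide)
  simp only [hilbR, hcube, and_comm, mul_one]

/-- on the centre `Z`, the metaplectic cocycle over `ℝ` is the Hilbert
symbol: `β(z(λ₁), z(λ₂)) = [λ₁, λ₂]` for `λ₁, λ₂ ∈ ℝˣ`, where `z(λ) = diag(λ,λ)`;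
in particular `β(z(-1), z(-1)) = -1`, so the extension does not split over `Z`. -/
theorem betaR_centre_hilbert (lam₁ lam₂ : ℝ) (h₁ : lam₁ ≠ 0) (h₂ : lam₂ ≠ 0) :
    betaR !![lam₁, 0; 0, lam₁] !![lam₂, 0; 0, lam₂] = hilbR lam₁ lam₂ ∧
    betaR !![(-1 : ℝ), 0; 0, -1] !![(-1 : ℝ), 0; 0, -1] = -1 := by
  refine ⟨betaR_z _ _ h₁ h₂, ?_⟩
  rw [betaR_z (-1) (-1) (by norm_num) (by norm_num)]
  simp [hilbR]
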